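/- For every R > 0 the kinetic energy of the profile on the ball B(0,R) satisfies the exact identity ∫_{B(0,R)} |w(z)|² dz = (R⁴/4) · ∫_0^{2π} |W(1,θ')|² dθ', where the left-hand integral is taken with respect to two-dimensional Lebesgue measure. In particular ∫_{B(0,R)} |w|² = C·R⁴ with C := (1/4)∫_0^{2π} |W(1,θ')|² dθ' independent of R. -/

import Mathlib

/-- The complex constant `A := −2ai/(a+i)`. -/
noncomputable def Aconst (a : ℝ) : ℂ := -2 * (a : ℂ) * Complex.I / ((a : ℂ) + Complex.I)

/-- The self-similar velocity profile
`W(r,θ) := e^{iθ} Σ_{k} (2a g_k/(r(a−i))) · conj( exp((2a/(a+i)) ln r) · e^{A(θ_k−θ)} ·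
e^{2πJ(r,θ,k)A}/(1−e^{2πA}) )`, where `J` is the winding-number function. -/
noncomputable def Wprof (a : ℝ) (M : ℕ) (g θs : Fin M → ℝ)
    (J : ℝ → ℝ → Fin M → ℤ) (r θ : ℝ) : ℂ :=
  Complex.exp (Complex.I * (θ : ℂ)) * ∑ k : Fin M,
    (2 * (a : ℂ) * (g k : ℂ) / ((r : ℂ) * ((a : ℂ) - Complex.I))) *
      (starRingEnd ℂ)
        (Complex.exp ((2 * (a : ℂ) / ((a : ℂ) + Complex.I)) * (Real.log r : ℂ)) *
          Complex.exp (Aconst a * ((θs k : ℂ) - (θ : ℂ))) *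
          (Complex.exp (2 * (Real.pi : ℂ) * (J r θ k : ℂ) * Aconst a) /
            (1 - Complex.exp (2 * (Real.pi : ℂ) * Aconst a))))

namespace WprofAux

lemma aI_ne (a : ℝ) : (a : ℂ) + Complex.I ≠ 0 := by
  intro h; have := congrArg Complex.im h; simp at this

lemma aI_ne' (a : ℝ) : (a : ℂ) - Complex.I ≠ 0 := by
  intro h; have := congrArg Complex.im h; simp at this

lemma Aconst_re (a : ℝ) (ha : 0 < a) : (Aconst a).re < 0 := by
  rw [Aconst, Complex.div_re]
  simp [Complex.normSq_apply]
  have h1 : 0 < a * a + 1 := by positivity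
  exact div_neg_of_neg_of_pos (by linarith) h1

lemma mul_mul_div_congr (E D F Q F' Q' : ℂ) (h : F * Q = F' * Q') :
    E * F * (Q / D) = E * F' * (Q' / D) := by
  rw [div_eq_mul_inv, div_eq_mul_inv]
  have h1 : E * F * (Q * D⁻¹) = F * Q * (E * D⁻¹) := by ring
  have h2 : E * F' * (Q' * D⁻¹) = F' * Q' * (E * D⁻¹) := by ring
  rw [h1, h2, h]

section JJ

variable {a : ℝ} {M : ℕ} {g θs : Fin M → ℝ} {J : ℝ → ℝ → Fin M → ℤ}

variable (hJ : ∀ (r θ : ℝ) (k : Fin M), 0 < r →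
      IsLeast {j : ℤ | 0 < a * (2 * Real.pi * (j : ℝ) + θs k - θ) + Real.log r} (J r θ k))

include hJ

lemma J_shift (ha : 0 < a) {r : ℝ} (hr : 0 < r) (θ : ℝ) (k : Fin M) :
    J r θ k = J 1 (θ - Real.log r / a) k := by
  have h1 := hJ r θ k hr
  have h2 := hJ 1 (θ - Real.log r / a) k one_pos
  have hset : {j : ℤ | 0 < a * (2 * Real.pi * (j : ℝ) + θs k - (θ - Real.log r / a)) + Real.log 1}
      = {j : ℤ | 0 < a * (2 * Real.pi * (j : ℝ) + θs k - θ) + Real.log r} := by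
    ext j
    simp only [Set.mem_setOf_eq, Real.log_one, add_zero]
    have : a * (2 * Real.pi * (j : ℝ) + θs k - (θ - Real.log r / a))
        = a * (2 * Real.pi * (j : ℝ) + θs k - θ) + Real.log r := by
      field_simp
      ring
    rw [this]
  rw [hset] at h2
  exact h1.unique h2

lemma J_add_period (θ : ℝ) (k : Fin M) :
    J 1 (θ + 2 * Real.pi) k = J 1 θ k + 1 := by
  have h1 := hJ 1 θ k one_pos
  have h2 := hJ 1 (θ + 2 * Real.pi) k one_pos
  refine h2.unique ?_
  constructor
  · show 0 < a * (2 * Real.pi * ((J 1 θ k + 1 : ℤ) : ℝ) + θs k - (θ + 2 * Real.pi)) + Real.log 1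
    have h3 := h1.1
    simp only [Set.mem_setOf_eq] at h3
    push_cast
    have : a * (2 * Real.pi * ((J 1 θ k : ℝ) + 1) + θs k - (θ + 2 * Real.pi))
        = a * (2 * Real.pi * (J 1 θ k : ℝ) + θs k - θ) := by ring
    rw [this]
    exact h3
  · intro j hj
    simp only [Set.mem_setOf_eq] at hj
    have hj' : (j - 1 : ℤ) ∈ {j : ℤ | 0 < a * (2 * Real.pi * (j : ℝ) + θs k - θ) + Real.log 1} := by
      simp only [Set.mem_setOf_eq]
      push_cast
      have : a * (2 * Real.pi * ((j : ℝ) - 1) + θs k - θ)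
          = a * (2 * Real.pi * (j : ℝ) + θs k - (θ + 2 * Real.pi)) := by ring
      rw [this]
      exact hj
    have := h1.2 hj'
    omega

lemma J_one_eq (ha : 0 < a) (θ : ℝ) (k : Fin M) :
    J 1 θ k = ⌊(θ - θs k) / (2 * Real.pi)⌋ + 1 := by
  have h1 := hJ 1 θ k one_pos
  have hpi := Real.two_pi_pos
  refine h1.unique ?_
  constructor
  · show 0 < a * (2 * Real.pi * ((⌊(θ - θs k) / (2 * Real.pi)⌋ + 1 : ℤ) : ℝ) + θs k - θ)
        + Real.log 1
    rw [Real.log_one, add_zero]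
    apply mul_pos ha
    have h2 : (θ - θs k) / (2 * Real.pi) < (⌊(θ - θs k) / (2 * Real.pi)⌋ : ℝ) + 1 :=
      Int.lt_floor_add_one _
    have h3 : θ - θs k < 2 * Real.pi * ((⌊(θ - θs k) / (2 * Real.pi)⌋ : ℝ) + 1) := by
      rw [div_lt_iff₀ hpi] at h2
      linarith [h2]
    push_cast
    linarith
  · intro j hj
    simp only [Set.mem_setOf_eq, Real.log_one, add_zero] at hj
    have h4 : 0 < 2 * Real.pi * (j : ℝ) + θs k - θ := by
      by_contra h
      push_neg at h
      nlinarith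
    have h5 : (θ - θs k) / (2 * Real.pi) < (j : ℝ) := by
      rw [div_lt_iff₀ hpi]
      linarith
    have := Int.floor_lt.mpr (by exact_mod_cast h5)
    omega

lemma Wprof_scale (ha : 0 < a) {r : ℝ} (hr : 0 < r) (θ : ℝ) :
    Wprof a M g θs J r θ =
      Complex.exp (Complex.I * ((Real.log r / a : ℝ) : ℂ)) * (r : ℂ) *
        Wprof a M g θs J 1 (θ - Real.log r / a) := by
  have hrc : (r : ℂ) ≠ 0 := by exact_mod_cast hr.ne'
  have hac : (a : ℂ) ≠ 0 := by exact_mod_cast ha.ne'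
  have hexpθ : Complex.exp (Complex.I * (θ : ℂ)) =
      Complex.exp (Complex.I * ((Real.log r / a : ℝ) : ℂ)) *
        Complex.exp (Complex.I * ((θ - Real.log r / a : ℝ) : ℂ)) := by
    rw [← Complex.exp_add]
    congr 1
    push_cast
    ring
  rw [Wprof, Wprof, hexpθ]
  have hsum : (∑ k : Fin M,
      (2 * (a : ℂ) * (g k : ℂ) / ((r : ℂ) * ((a : ℂ) - Complex.I))) *
        (starRingEnd ℂ)
          (Complex.exp ((2 * (a : ℂ) / ((a : ℂ) + Complex.I)) * (Real.log r : ℂ)) *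
            Complex.exp (Aconst a * ((θs k : ℂ) - (θ : ℂ))) *
            (Complex.exp (2 * (Real.pi : ℂ) * (J r θ k : ℂ) * Aconst a) /
              (1 - Complex.exp (2 * (Real.pi : ℂ) * Aconst a))))) =
      (r : ℂ) * ∑ k : Fin M,
      (2 * (a : ℂ) * (g k : ℂ) / ((1 : ℂ) * ((a : ℂ) - Complex.I))) *
        (starRingEnd ℂ)
          (Complex.exp ((2 * (a : ℂ) / ((a : ℂ) + Complex.I)) * (Real.log 1 : ℂ)) *
            Complex.exp (Aconst a * ((θs k : ℂ) - ((θ - Real.log r / a : ℝ) : ℂ))) *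
            (Complex.exp (2 * (Real.pi : ℂ) * (J 1 (θ - Real.log r / a) k : ℂ) * Aconst a) /
              (1 - Complex.exp (2 * (Real.pi : ℂ) * Aconst a)))) := by
    rw [Finset.mul_sum]
    refine Finset.sum_congr rfl fun k _ => ?_
    rw [← J_shift hJ ha hr θ k]
    have hexp : Complex.exp ((2 * (a : ℂ) / ((a : ℂ) + Complex.I)) * (Real.log r : ℂ)) *
          Complex.exp (Aconst a * ((θs k : ℂ) - (θ : ℂ))) =
        ((r : ℂ))^2 *
          (Complex.exp ((2 * (a : ℂ) / ((a : ℂ) + Complex.I)) * ((Real.log 1 : ℝ) : ℂ)) *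
          Complex.exp (Aconst a * ((θs k : ℂ) - ((θ - Real.log r / a : ℝ) : ℂ)))) := by
      rw [Real.log_one]
      have hr2 : ((r : ℂ))^2 = Complex.exp ((Real.log r : ℂ) + (Real.log r : ℂ)) := by
        rw [Complex.exp_add, ← Complex.ofReal_exp, Real.exp_log hr]
        ring
      rw [hr2, ← Complex.exp_add, ← Complex.exp_add, ← Complex.exp_add]
      congr 1
      have hA : Aconst a = ((2 * (a : ℂ) / ((a : ℂ) + Complex.I)) - 2) * (a : ℂ) := by
        rw [Aconst]
        field_simp [aI_ne a]
        ring
      rw [hA]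
      push_cast
      field_simp
      ring
    have hexp' := congrArg (starRingEnd ℂ) hexp
    simp only [map_mul, map_pow, Complex.conj_ofReal] at hexp'
    simp only [map_mul]
    rw [hexp']
    have hc : 2 * (a:ℂ) * (g k : ℂ) / ((r:ℂ) * ((a:ℂ) - Complex.I)) * (r:ℂ)^2
        = (r:ℂ) * (2 * (a:ℂ) * (g k : ℂ) / (1 * ((a:ℂ) - Complex.I))) := by
      field_simp [aI_ne' a]
    calc 2 * (a:ℂ) * (g k : ℂ) / ((r:ℂ) * ((a:ℂ) - Complex.I)) *
          ((r:ℂ)^2 *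
            ((starRingEnd ℂ) (Complex.exp (2 * ↑a / (↑a + Complex.I) * ((Real.log 1 : ℝ):ℂ))) *
              (starRingEnd ℂ) (Complex.exp (Aconst a * (↑(θs k) - ↑(θ - Real.log r / a))))) *
            (starRingEnd ℂ)
              (Complex.exp (2 * (Real.pi:ℂ) * ((J r θ k : ℤ):ℂ) * Aconst a) /
              (1 - Complex.exp (2 * (Real.pi:ℂ) * Aconst a))))
        = (2 * (a:ℂ) * (g k : ℂ) / ((r:ℂ) * ((a:ℂ) - Complex.I)) * (r:ℂ)^2) *
          ((starRingEnd ℂ) (Complex.exp (2 * ↑a / (↑a + Complex.I) * ((Real.log 1 : ℝ):ℂ))) *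
            (starRingEnd ℂ) (Complex.exp (Aconst a * (↑(θs k) - ↑(θ - Real.log r / a)))) *
            (starRingEnd ℂ)
              (Complex.exp (2 * (Real.pi:ℂ) * ((J r θ k : ℤ):ℂ) * Aconst a) /
              (1 - Complex.exp (2 * (Real.pi:ℂ) * Aconst a)))) := by ring
      _ = _ := by rw [hc]; ring
  rw [hsum]
  push_cast
  ring

lemma Wprof_periodic (ha : 0 < a) :
    Function.Periodic (fun θ => Wprof a M g θs J 1 θ) (2 * Real.pi) := by
  intro θ
  simp only [Wprof]
  have h1 : Complex.exp (Complex.I * ((θ + 2 * Real.pi : ℝ) : ℂ)) =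
      Complex.exp (Complex.I * (θ : ℂ)) := by
    push_cast
    rw [mul_add, Complex.exp_add]
    have : Complex.I * (2 * (Real.pi : ℂ)) = 2 * (Real.pi : ℂ) * Complex.I := by ring
    rw [this, Complex.exp_two_pi_mul_I, mul_one]
  rw [h1]
  congr 1
  refine Finset.sum_congr rfl fun k _ => ?_
  rw [J_add_period hJ θ k]
  congr 1
  congr 1
  apply mul_mul_div_congr
  rw [← Complex.exp_add, ← Complex.exp_add]
  congr 1
  push_cast
  ring

lemma Wprof_one_bound (ha : 0 < a) :
    ∃ C : ℝ, ∀ θ : ℝ, ‖Wprof a M g θs J 1 θ‖ ≤ C := by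
  refine ⟨∑ k : Fin M, ‖2 * (a : ℂ) * (g k : ℂ) / ((1 : ℂ) * ((a : ℂ) - Complex.I))‖
      * (1 / ‖1 - Complex.exp (2 * (Real.pi : ℂ) * Aconst a)‖), fun θ => ?_⟩
  rw [Wprof, norm_mul, Complex.norm_exp]
  have h0 : (Complex.I * (θ : ℂ)).re = 0 := by simp
  rw [h0, Real.exp_zero, one_mul]
  refine le_trans (norm_sum_le _ _) (Finset.sum_le_sum fun k _ => ?_)
  rw [norm_mul, Complex.norm_conj]
  rw [Real.log_one, Complex.ofReal_zero, mul_zero, Complex.exp_zero, one_mul]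
  have hx : 0 < 2 * Real.pi * ((J 1 θ k : ℤ) : ℝ) + θs k - θ := by
    have h1 := (hJ 1 θ k one_pos).1
    simp only [Set.mem_setOf_eq, Real.log_one, add_zero] at h1
    by_contra h
    push_neg at h
    nlinarith
  have hz : Aconst a * ((θs k : ℂ) - (θ : ℂ)) + 2 * (Real.pi : ℂ) * ((J 1 θ k : ℤ) : ℂ) * Aconst a
      = Aconst a * ((2 * Real.pi * ((J 1 θ k : ℤ) : ℝ) + θs k - θ : ℝ) : ℂ) := by
    push_cast
    ring
  have habs1 : ‖Complex.exp (Aconst a * ((θs k : ℂ) - (θ : ℂ))) *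
      Complex.exp (2 * (Real.pi : ℂ) * ((J 1 θ k : ℤ) : ℂ) * Aconst a)‖ ≤ 1 := by
    rw [← Complex.exp_add, hz, Complex.norm_exp, Real.exp_le_one_iff]
    have hre : (Aconst a * ((2 * Real.pi * ((J 1 θ k : ℤ) : ℝ) + θs k - θ : ℝ) : ℂ)).re
        = (Aconst a).re * (2 * Real.pi * ((J 1 θ k : ℤ) : ℝ) + θs k - θ) := by
      simp [Complex.mul_re]
    rw [hre]
    exact le_of_lt (mul_neg_of_neg_of_pos (Aconst_re a ha) hx)
  rw [mul_div_assoc']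
  simp only [norm_div]
  gcongr _ * (?_ / _)

end JJ

/-- explicit winding number -/
noncomputable def Jex {M : ℕ} (θs : Fin M → ℝ) : ℝ → ℝ → Fin M → ℤ :=
  fun _ θ k => ⌊(θ - θs k) / (2 * Real.pi)⌋ + 1

lemma measurable_WprofJex (a : ℝ) (M : ℕ) (g θs : Fin M → ℝ) :
    Measurable (fun θ => Wprof a M g θs (Jex θs) 1 θ) := by
  unfold Wprof Jex
  apply Measurable.mul
  · exact (Complex.measurable_exp.comp
      ((measurable_const.mul (Complex.measurable_ofReal.comp measurable_id))))
  · apply Finset.measurable_sum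
    intro k _
    apply Measurable.mul measurable_const
    refine Measurable.comp (g := fun z : ℂ => (starRingEnd ℂ) z) continuous_star.measurable ?_
    apply Measurable.mul
    · apply Measurable.mul measurable_const
      exact Complex.measurable_exp.comp (measurable_const.mul
        (Measurable.const_sub (Complex.measurable_ofReal.comp measurable_id) _))
    · apply Measurable.div _ measurable_const
      apply Complex.measurable_exp.comp
      apply Measurable.mul _ measurable_const
      apply Measurable.mul measurable_const
      have h1 : Measurable fun θ : ℝ => (⌊(θ - θs k) / (2 * Real.pi)⌋ + 1 : ℤ) := by
        exact (Measurable.floor ((measurable_id.sub_const _).div_const _)).add_const 1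
      exact (measurable_from_top (α := ℤ) (f := fun n : ℤ => (n : ℂ))).comp h1

end WprofAux

open WprofAux MeasureTheory Real Set

/-- For every `R > 0` the kinetic energy of the profile `w(z) := W(|z|, arg z)`
on the ball `B(0,R) ⊂ ℂ` satisfies
`∫_{B(0,R)} |w(z)|² dz = (R⁴/4) · ∫_0^{2π} |W(1,θ')|² dθ'`,
the left-hand integral being with respect to two-dimensional Lebesgue measure. -/
theorem Wprof_energy_identity (a : ℝ) (ha : 0 < a) (M : ℕ) (hM : 1 ≤ M)
    (g θs : Fin M → ℝ) (J : ℝ → ℝ → Fin M → ℤ)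
    (hJ : ∀ (r θ : ℝ) (k : Fin M), 0 < r →
      IsLeast {j : ℤ | 0 < a * (2 * Real.pi * (j : ℝ) + θs k - θ) + Real.log r} (J r θ k))
    (R : ℝ) (hR : 0 < R) :
    (∫ z in Metric.ball (0 : ℂ) R,
        ‖Wprof a M g θs J ‖z‖ (Complex.arg z)‖ ^ 2) =
      R ^ 4 / 4 * ∫ θ' in (0 : ℝ)..(2 * Real.pi),
        ‖Wprof a M g θs J 1 θ'‖ ^ 2 := by
  have hpi := Real.pi_pos
  set W1 : ℝ → ℝ := fun θ => ‖Wprof a M g θs J 1 θ‖ ^ 2 with hW1def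
  set f : ℂ → ℝ := fun z =>
    ‖Wprof a M g θs J ‖z‖ (Complex.arg z)‖ ^ 2 with hfdef
  -- measurability of W1
  have hWfun : (fun θ => Wprof a M g θs J 1 θ) = fun θ => Wprof a M g θs (Jex θs) 1 θ := by
    funext θ
    unfold Wprof
    congr 1
    refine Finset.sum_congr rfl fun k _ => ?_
    rw [J_one_eq hJ ha θ k]
    rfl
  have hW1meas : Measurable W1 := by
    have h1 : Measurable (fun θ => Wprof a M g θs J 1 θ) := by
      rw [hWfun]; exact measurable_WprofJex a M g θs
    exact (continuous_norm.measurable.comp h1).pow_const 2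
  obtain ⟨C, hC⟩ := Wprof_one_bound hJ ha
  have hW1bd : ∀ θ, W1 θ ≤ C ^ 2 := by
    intro θ
    simp only [hW1def]
    have := hC θ
    have h0 : (0:ℝ) ≤ ‖Wprof a M g θs J 1 θ‖ := norm_nonneg _
    nlinarith
  have hW1nn : ∀ θ, 0 ≤ W1 θ := fun θ => by positivity
  have hW1per : Function.Periodic W1 (2 * Real.pi) := by
    intro θ
    exact congrArg (fun z => ‖z‖ ^ 2) (Wprof_periodic hJ ha θ)
  -- the inner-integral constant
  set K0 : ℝ := ∫ θ' in (0:ℝ)..(2*Real.pi), W1 θ' with hK0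
  -- step 1 and 2: polar coordinates
  have step12 : (∫ z in Metric.ball (0 : ℂ) R, f z)
      = ∫ p in polarCoord.target, p.1 • (Metric.ball (0:ℂ) R).indicator f
          (Complex.polarCoord.symm p) := by
    rw [← integral_indicator Metric.isOpen_ball.measurableSet]
    rw [← Complex.integral_comp_polarCoord_symm]
  -- step 3: pointwise identification on the target
  have step3 : (∫ p in polarCoord.target, p.1 • (Metric.ball (0:ℂ) R).indicator f
          (Complex.polarCoord.symm p))
      = ∫ p in polarCoord.target,
          (Ioo (0:ℝ) R ×ˢ Ioo (-Real.pi) Real.pi).indicator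
            (fun p => p.1 ^ 3 * W1 (p.2 - Real.log p.1 / a)) p := by
    refine setIntegral_congr_fun polarCoord.open_target.measurableSet ?_
    rintro ⟨r, θ⟩ hp
    dsimp only
    rw [polarCoord_target] at hp
    obtain ⟨hr, hθ⟩ := hp
    simp only [Set.mem_Ioi] at hr
    have habs : ‖Complex.polarCoord.symm (r, θ)‖ = r := by
      rw [Complex.norm_polarCoord_symm]
      exact abs_of_pos hr
    by_cases hrR : r < R
    · have hmem1 : Complex.polarCoord.symm (r, θ) ∈ Metric.ball (0:ℂ) R := by
        rw [mem_ball_zero_iff, habs]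
        exact hrR
      have hmem2 : ((r,θ) : ℝ × ℝ) ∈ Ioo (0:ℝ) R ×ˢ Ioo (-Real.pi) Real.pi :=
        ⟨⟨hr, hrR⟩, hθ⟩
      rw [Set.indicator_of_mem hmem1, Set.indicator_of_mem hmem2]
      have harg : Complex.arg (Complex.polarCoord.symm (r, θ)) = θ := by
        rw [Complex.polarCoord_symm_apply]
        have : ((r:ℂ) * (Real.cos θ + Real.sin θ * Complex.I)).arg
            = ((Real.cos θ : ℂ) + Real.sin θ * Complex.I).arg := by
          exact Complex.arg_real_mul _ hr
        rw [this, Complex.ofReal_cos, Complex.ofReal_sin]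
        exact Complex.arg_cos_add_sin_mul_I ⟨hθ.1, hθ.2.le⟩
      simp only [hfdef, habs, harg, smul_eq_mul]
      rw [Wprof_scale hJ ha hr θ]
      rw [norm_mul, norm_mul, Complex.norm_exp]
      have h0 : (Complex.I * ((Real.log r / a : ℝ) : ℂ)).re = 0 := by simp
      rw [h0, Real.exp_zero, one_mul, Complex.norm_of_nonneg hr.le]
      simp only [hW1def]
      ring
    · have hmem1 : Complex.polarCoord.symm (r, θ) ∉ Metric.ball (0:ℂ) R := by
        rw [mem_ball_zero_iff, habs]
        exact fun h => hrR h
      have hmem2 : ((r,θ) : ℝ × ℝ) ∉ Ioo (0:ℝ) R ×ˢ Ioo (-Real.pi) Real.pi := by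
        intro h
        exact hrR h.1.2
      rw [Set.indicator_of_notMem hmem1, Set.indicator_of_notMem hmem2, smul_zero]
  -- step 4: remove the indicator
  have hmeasS : MeasurableSet (Ioo (0:ℝ) R ×ˢ Ioo (-Real.pi) Real.pi) :=
    measurableSet_Ioo.prod measurableSet_Ioo
  have step4 : (∫ p in polarCoord.target,
          (Ioo (0:ℝ) R ×ˢ Ioo (-Real.pi) Real.pi).indicator
            (fun p => p.1 ^ 3 * W1 (p.2 - Real.log p.1 / a)) p)
      = ∫ p in Ioo (0:ℝ) R ×ˢ Ioo (-Real.pi) Real.pi,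
          p.1 ^ 3 * W1 (p.2 - Real.log p.1 / a) := by
    rw [setIntegral_indicator hmeasS]
    congr 1
    rw [polarCoord_target, Set.prod_inter_prod, Set.inter_self,
      Set.inter_eq_right.mpr Set.Ioo_subset_Ioi_self]
  -- integrability for Fubini
  have hKmeas : Measurable (fun p : ℝ × ℝ => p.1 ^ 3 * W1 (p.2 - Real.log p.1 / a)) := by
    refine Measurable.mul (measurable_fst.pow_const 3) (hW1meas.comp ?_)
    exact measurable_snd.sub ((Real.measurable_log.comp measurable_fst).div_const a)
  have hint : IntegrableOn (fun p : ℝ × ℝ => p.1 ^ 3 * W1 (p.2 - Real.log p.1 / a))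
      (Ioo (0:ℝ) R ×ˢ Ioo (-Real.pi) Real.pi) volume := by
    have hfin : volume (Ioo (0:ℝ) R ×ˢ Ioo (-Real.pi) Real.pi) ≠ ⊤ := by
      rw [Measure.volume_eq_prod, Measure.prod_prod, Real.volume_Ioo, Real.volume_Ioo]
      exact ENNReal.mul_ne_top ENNReal.ofReal_ne_top ENNReal.ofReal_ne_top
    refine Measure.integrableOn_of_bounded (M := R ^ 3 * C ^ 2) hfin hKmeas.aestronglyMeasurable ?_
    · refine (ae_restrict_iff' hmeasS).mpr (Filter.Eventually.of_forall ?_)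
      rintro ⟨r, θ⟩ ⟨hr, _⟩
      have h1 : 0 ≤ W1 (θ - Real.log r / a) := hW1nn _
      have h2 : W1 (θ - Real.log r / a) ≤ C ^ 2 := hW1bd _
      have h3 : 0 < r := hr.1
      have h4 : r ≤ R := hr.2.le
      rw [Real.norm_eq_abs, abs_of_nonneg (by positivity)]
      have h5 : r ^ 3 ≤ R ^ 3 := pow_le_pow_left₀ h3.le h4 3
      exact mul_le_mul h5 h2 h1 (pow_nonneg hR.le 3)
  -- step 5: Fubini
  have step5 : (∫ p in Ioo (0:ℝ) R ×ˢ Ioo (-Real.pi) Real.pi,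
          p.1 ^ 3 * W1 (p.2 - Real.log p.1 / a))
      = ∫ r in Ioo (0:ℝ) R, ∫ θ in Ioo (-Real.pi) Real.pi,
          r ^ 3 * W1 (θ - Real.log r / a) := by
    rw [Measure.volume_eq_prod] at hint ⊢
    exact setIntegral_prod _ hint
  -- step 6: inner integral via periodicity
  have step6 : ∀ r : ℝ, (∫ θ in Ioo (-Real.pi) Real.pi, r ^ 3 * W1 (θ - Real.log r / a))
      = r ^ 3 * K0 := by
    intro r
    rw [integral_const_mul]
    congr 1
    set c : ℝ := Real.log r / a
    have h1 : (∫ θ in Ioo (-Real.pi) Real.pi, W1 (θ - c))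
        = ∫ θ in (-Real.pi)..Real.pi, W1 (θ - c) := by
      rw [intervalIntegral.integral_of_le (by linarith), integral_Ioc_eq_integral_Ioo]
    rw [h1, intervalIntegral.integral_comp_sub_right (fun θ => W1 θ) c]
    have h2 : Real.pi - c = (-Real.pi - c) + 2 * Real.pi := by ring
    rw [h2, hW1per.intervalIntegral_add_eq (-Real.pi - c) 0, zero_add]
  -- step 7: outer integral
  have step7 : (∫ r in Ioo (0:ℝ) R, r ^ 3 * K0) = R ^ 4 / 4 * K0 := by
    rw [integral_mul_const]
    congr 1
    have h1 : (∫ r in Ioo (0:ℝ) R, r ^ 3) = ∫ r in (0:ℝ)..R, r ^ 3 := by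
      rw [intervalIntegral.integral_of_le hR.le, integral_Ioc_eq_integral_Ioo]
    rw [h1, integral_pow]
    norm_num
  calc (∫ z in Metric.ball (0 : ℂ) R, f z)
      = ∫ r in Ioo (0:ℝ) R, ∫ θ in Ioo (-Real.pi) Real.pi,
          r ^ 3 * W1 (θ - Real.log r / a) := by rw [step12, step3, step4, step5]
    _ = ∫ r in Ioo (0:ℝ) R, r ^ 3 * K0 := by
        exact setIntegral_congr_fun measurableSet_Ioo fun r _ => step6 r
    _ = R ^ 4 / 4 * K0 := step7
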